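/- Let $y \in \mathbb{R}$, let $\gamma$ be a real sequence of sufficient length with Riesz functional $L$, and let $f \in \mathbb{R}[x]$. Suppose $\mathcal{H}_f(d_2-1)$ is invertible, and define $g(x) = x^{d_2} - \sum_{i=0}^{d_2-1}\lambda_i x^i$ where $(\lambda_0,\ldots,\lambda_{d_2-1})^T = (\mathcal{H}_f(d_2-1))^{-1} (L(f x^{d_2}),\ldots,L(f x^{2d_2-1}))^T$. Then $\mathcal{H}_{(x-y)f(x)}(d_2-1) = \mathcal{H}_{f(x)}(d_2-1)\,(C_g - y I)$, where $C_g$ is the companion matrix of $g$. Consequently, $\det \mathcal{H}_{(x-y)f(x)}(d_2-1) = 0$ if and only if $g(y) = 0$. -/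

import Mathlib

open Polynomial

/-- The Riesz functional of a sequence `γ`: it sends `x^m ↦ γ m`. -/
noncomputable def riesz (γ : ℕ → ℝ) (p : Polynomial ℝ) : ℝ :=
  ∑ m ∈ p.support, p.coeff m * γ m

/-- The localizing moment matrix `H_h(d2-1)` of `γ`, of size `d2 × d2`, with
entries `L(h(x) x^{i+j})` (0-based indices). -/
noncomputable def locMat (γ : ℕ → ℝ) (d2 : ℕ) (h : Polynomial ℝ) :
    Matrix (Fin d2) (Fin d2) ℝ :=
  fun i j => riesz γ (h * X ^ ((i : ℕ) + (j : ℕ)))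



lemma riesz_eq_sum (γ : ℕ → ℝ) (p : Polynomial ℝ) :
    riesz γ p = p.sum (fun m a => a * γ m) := rfl

lemma riesz_add (γ : ℕ → ℝ) (p q : Polynomial ℝ) :
    riesz γ (p + q) = riesz γ p + riesz γ q := by
  simp only [riesz_eq_sum]
  exact Polynomial.sum_add_index p q _ (by simp) (by intros; ring)

lemma riesz_smul (γ : ℕ → ℝ) (c : ℝ) (p : Polynomial ℝ) :
    riesz γ (c • p) = c * riesz γ p := by
  simp only [riesz_eq_sum]
  rw [Polynomial.sum_smul_index p c _ (by simp), Polynomial.sum, Polynomial.sum,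
    Finset.mul_sum]
  exact Finset.sum_congr rfl (by intros; ring)

lemma riesz_sub (γ : ℕ → ℝ) (p q : Polynomial ℝ) :
    riesz γ (p - q) = riesz γ p - riesz γ q := by
  have := riesz_add γ (p - q) q
  simp at this; linarith

lemma companion_det (m : ℕ) (lam : Fin (m+1) → ℝ) (y : ℝ)
    (Cg : Matrix (Fin (m+1)) (Fin (m+1)) ℝ)
    (hCg : ∀ i j, Cg i j =
      if (j : ℕ) = m then lam i else if (i : ℕ) = (j : ℕ) + 1 then 1 else 0) :
    (Cg - y • (1 : Matrix (Fin (m+1)) (Fin (m+1)) ℝ)).det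
      = (-1) ^ (m+1) * (y ^ (m+1) - ∑ i, lam i * y ^ (i : ℕ)) := by
  set N : Matrix (Fin (m+1)) (Fin (m+1)) ℝ := Cg - y • 1 with hN
  have key := Matrix.det_updateRow_sum N 0 (fun k => y ^ (k : ℕ))
  simp only [Fin.val_zero, pow_zero, one_smul] at key
  rw [← key]
  -- compute the new row
  have hrow : (∑ k : Fin (m+1), y ^ (k : ℕ) • N k) =
      fun j : Fin (m+1) => if (j : ℕ) = m then (∑ k, lam k * y ^ (k : ℕ)) - y ^ (m+1) else 0 := by
    funext j
    have expand : ∀ k : Fin (m+1), (y ^ (k:ℕ) • N k) j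
        = y ^ (k:ℕ) * Cg k j - y ^ (k:ℕ) * y * (if k = j then 1 else 0) := by
      intro k
      simp only [Pi.smul_apply, smul_eq_mul, hN, Matrix.sub_apply,
        Matrix.smul_apply, Matrix.one_apply, smul_eq_mul]
      ring
    rw [Finset.sum_apply, Finset.sum_congr rfl (fun k _ => expand k),
      Finset.sum_sub_distrib]
    have h2 : ∑ k : Fin (m+1), y ^ (k:ℕ) * y * (if k = j then 1 else 0) = y ^ ((j:ℕ)+1) := by
      rw [Finset.sum_eq_single j (by intro k _ hk; simp [hk]) (by simp)]
      simp [pow_succ]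
    rw [h2]
    by_cases hj : (j : ℕ) = m
    · have : ∀ k : Fin (m+1), y ^ (k:ℕ) * Cg k j = lam k * y ^ (k:ℕ) := by
        intro k; rw [hCg k j, if_pos hj]; ring
      rw [Finset.sum_congr rfl fun k _ => this k, hj]
      simp
    · simp only [hj, if_false]
      have hjlt : (j : ℕ) + 1 < m + 1 := by omega
      have : ∀ k : Fin (m+1), y ^ (k:ℕ) * Cg k j
          = if k = (⟨(j:ℕ)+1, hjlt⟩ : Fin (m+1)) then y ^ ((j:ℕ)+1) else 0 := by
        intro k
        rw [hCg k j, if_neg hj]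
        by_cases hk : (k : ℕ) = (j : ℕ) + 1 <;> simp [Fin.ext_iff, hk]
      rw [Finset.sum_congr rfl fun k _ => this k, Finset.sum_ite_eq']
      simp
  rw [hrow]
  -- expand along row 0
  rw [Matrix.det_succ_row_zero]
  rw [Finset.sum_eq_single (Fin.last m)]
  · have h0 : (Matrix.updateRow N 0
        (fun j : Fin (m+1) => if (j : ℕ) = m then (∑ k, lam k * y ^ (k : ℕ)) - y ^ (m+1) else 0))
        0 (Fin.last m) = (∑ k, lam k * y ^ (k : ℕ)) - y ^ (m+1) := by
      rw [Matrix.updateRow_self]; simp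
    rw [h0]
    have hsub : (Matrix.updateRow N 0
        (fun j : Fin (m+1) => if (j : ℕ) = m then (∑ k, lam k * y ^ (k : ℕ)) - y ^ (m+1) else 0)).submatrix
        Fin.succ (Fin.last m).succAbove = fun i j : Fin m =>
        (if (i:ℕ) = (j:ℕ) then 1 else 0) - y * (if (i:ℕ) + 1 = (j:ℕ) then 1 else 0) := by
      funext i j
      simp only [Matrix.submatrix_apply, Fin.succAbove_last, Matrix.updateRow_ne
        (Fin.succ_ne_zero i), hN, Matrix.sub_apply, Matrix.smul_apply, Matrix.one_apply,
        smul_eq_mul]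
      rw [hCg]
      have hj : ((j.castSucc : Fin (m+1)) : ℕ) = (j : ℕ) := rfl
      have hjm : (j : ℕ) ≠ m := by omega
      rw [hj, if_neg hjm]
      congr 1
      · simp [Fin.ext_iff]
      · congr 1
        simp [Fin.ext_iff, eq_comm]
    rw [hsub]
    have hdet1 : (Matrix.det fun i j : Fin m =>
        (if (i:ℕ) = (j:ℕ) then 1 else 0) - y * (if (i:ℕ) + 1 = (j:ℕ) then 1 else 0)) = 1 := by
      rw [show (Matrix.det fun i j : Fin m =>
          (if (i:ℕ) = (j:ℕ) then 1 else 0) - y * (if (i:ℕ) + 1 = (j:ℕ) then 1 else 0)) =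
          Matrix.det (Matrix.of fun i j : Fin m =>
          (if (i:ℕ) = (j:ℕ) then 1 else 0) - y * (if (i:ℕ) + 1 = (j:ℕ) then 1 else 0)) from rfl,
        Matrix.det_of_upperTriangular]
      · simp
      · intro i j hij
        have h' : (j : ℕ) < (i : ℕ) := hij
        simp only [Matrix.of_apply]
        rw [if_neg (by omega), if_neg (by omega)]
        ring
    rw [hdet1, Fin.val_last]
    ring
  · intro j _ hj
    have : (j : ℕ) ≠ m := fun h => hj (by ext; simp [h])
    rw [Matrix.updateRow_self]
    simp [this]
  · simp

theorem stmt_16 (d2 : ℕ) (hd2 : 1 ≤ d2) (γ : ℕ → ℝ) (y : ℝ)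
    (f : Polynomial ℝ)
    (hinv : IsUnit (locMat γ d2 f).det)
    (lam : Fin d2 → ℝ)
    (hlam : (locMat γ d2 f).mulVec lam =
      fun i : Fin d2 => riesz γ (f * X ^ (d2 + (i : ℕ))))
    (Cg : Matrix (Fin d2) (Fin d2) ℝ)
    (hCg : ∀ i j : Fin d2, Cg i j =
      if (j : ℕ) = d2 - 1 then lam i else if (i : ℕ) = (j : ℕ) + 1 then 1 else 0) :
    locMat γ d2 ((X - C y) * f) = locMat γ d2 f * (Cg - y • (1 : Matrix (Fin d2) (Fin d2) ℝ)) ∧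
    ((locMat γ d2 ((X - C y) * f)).det = 0 ↔
      y ^ d2 - ∑ i : Fin d2, lam i * y ^ (i : ℕ) = 0) := by
  obtain ⟨m, rfl⟩ : ∃ m, d2 = m + 1 := ⟨d2 - 1, by omega⟩
  have hCg' : ∀ i j : Fin (m+1), Cg i j =
      if (j : ℕ) = m then lam i else if (i : ℕ) = (j : ℕ) + 1 then 1 else 0 := by
    intro i j
    rw [hCg i j]
    norm_num
  have hmul : locMat γ (m+1) ((X - C y) * f)
      = locMat γ (m+1) f * (Cg - y • (1 : Matrix (Fin (m+1)) (Fin (m+1)) ℝ)) := by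
    ext i j
    have hpoly : (X - C y) * f * X ^ ((i:ℕ)+(j:ℕ))
        = f * X ^ ((i:ℕ)+(j:ℕ)+1) - y • (f * X ^ ((i:ℕ)+(j:ℕ))) := by
      rw [Polynomial.smul_eq_C_mul, pow_succ]; ring
    have lhs : locMat γ (m+1) ((X - C y) * f) i j
        = riesz γ (f * X ^ ((i:ℕ)+(j:ℕ)+1)) - y * riesz γ (f * X ^ ((i:ℕ)+(j:ℕ))) := by
      show riesz γ ((X - C y) * f * X ^ ((i:ℕ)+(j:ℕ))) = _
      rw [hpoly, riesz_sub, riesz_smul]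
    have rhs1 : (locMat γ (m+1) f * Cg) i j = riesz γ (f * X ^ ((i:ℕ)+(j:ℕ)+1)) := by
      rw [Matrix.mul_apply]
      by_cases hj : (j : ℕ) = m
      · have h1 : ∀ k : Fin (m+1), locMat γ (m+1) f i k * Cg k j
            = locMat γ (m+1) f i k * lam k := by
          intro k; rw [hCg' k j, if_pos hj]
        rw [Finset.sum_congr rfl fun k _ => h1 k]
        have hv := congrFun hlam i
        simp only [Matrix.mulVec, dotProduct] at hv
        rw [hv, show (m+1) + (i:ℕ) = (i:ℕ)+(j:ℕ)+1 by omega]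
      · have hjlt : (j : ℕ) + 1 < m + 1 := by omega
        set j' : Fin (m+1) := ⟨(j:ℕ)+1, hjlt⟩ with hj'
        have h1 : ∀ k : Fin (m+1), locMat γ (m+1) f i k * Cg k j
            = if k = j' then locMat γ (m+1) f i j' else 0 := by
          intro k
          rw [hCg' k j, if_neg hj]
          by_cases hk : (k : ℕ) = (j : ℕ) + 1
          · have hkj : k = j' := Fin.ext hk
            rw [if_pos hk, if_pos hkj, hkj, mul_one]
          · have hkj : k ≠ j' := fun h => hk (by rw [h])
            simp [hk, hkj]
        rw [Finset.sum_congr rfl fun k _ => h1 k, Finset.sum_ite_eq']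
        simp only [Finset.mem_univ, if_true]
        show riesz γ (f * X ^ ((i:ℕ) + ((j:ℕ)+1))) = _
        rw [show (i:ℕ) + ((j:ℕ)+1) = (i:ℕ)+(j:ℕ)+1 by omega]
    rw [lhs, Matrix.mul_sub, Matrix.sub_apply, rhs1, Matrix.mul_smul, Matrix.mul_one,
      Matrix.smul_apply, smul_eq_mul]
    rfl
  refine ⟨hmul, ?_⟩
  rw [hmul, Matrix.det_mul, companion_det m lam y Cg hCg', hinv.mul_right_eq_zero]
  have hne : ((-1:ℝ)) ^ (m+1) ≠ 0 := pow_ne_zero _ (by norm_num)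
  rw [mul_eq_zero]
  simp [hne]
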